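/- For all integers ℓ ≥ 1 with ℓ ≠ 4 and all k with 1 ≤ k ≤ ⌊4ℓ/2⌋ - 3, the coefficients of binom{ℓ+4}{4}_q satisfy p_{k+1}(ℓ,4) - p_k(ℓ,4) ≥ 1. -/

import Mathlib

open PowerSeries

/-- `S a = Σ_{a ∣ n} X^n` in `ℚ⟦X⟧`. -/
noncomputable def S (a : ℕ) : PowerSeries ℚ :=
  PowerSeries.mk fun n => if a ∣ n then 1 else 0

lemma coeff_S (a n : ℕ) : PowerSeries.coeff n (S a) = if a ∣ n then 1 else 0 :=
  PowerSeries.coeff_mk _ _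

lemma S_mul_eq_one (a : ℕ) (ha : a ≠ 0) :
    (1 - (PowerSeries.X : PowerSeries ℚ) ^ a) * S a = 1 := by
  ext n
  rw [sub_mul, one_mul, map_sub, PowerSeries.coeff_X_pow_mul', coeff_S, coeff_S,
    PowerSeries.coeff_one]
  by_cases hD : n = 0
  · subst hD
    rw [if_pos (dvd_zero a), if_neg (by omega), if_pos rfl]; norm_num
  · rw [if_neg hD]
    by_cases hA : a ∣ n
    · have hB : a ≤ n := Nat.le_of_dvd (by omega) hA
      rw [if_pos hA, if_pos hB, if_pos (Nat.dvd_sub hA dvd_rfl)]; norm_num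
    · rw [if_neg hA]
      by_cases hB : a ≤ n
      · rw [if_pos hB, if_neg (fun hC => hA (by
          have := Nat.dvd_add hC (dvd_refl a)
          rwa [Nat.sub_add_cancel hB] at this))]
        norm_num
      · rw [if_neg hB]; norm_num

lemma constCoeff_S (a : ℕ) : PowerSeries.constantCoeff (S a) = 1 := by
  rw [← PowerSeries.coeff_zero_eq_constantCoeff, coeff_S, if_pos (dvd_zero a)]

lemma prod_inv :
    ((∏ i ∈ Finset.range 4, (1 - (PowerSeries.X : PowerSeries ℚ) ^ (i + 1))))⁻¹
      = S 1 * S 2 * S 3 * S 4 := by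
  rw [PowerSeries.inv_eq_iff_mul_eq_one]
  · simp only [Finset.prod_range_succ, Finset.prod_range_zero, one_mul]
    calc (S 1 * S 2 * S 3 * S 4) *
          ((1 - PowerSeries.X ^ (0+1)) * (1 - PowerSeries.X ^ (1+1)) *
            (1 - PowerSeries.X ^ (2+1)) * (1 - PowerSeries.X ^ (3+1)))
        = ((1 - PowerSeries.X ^ 1) * S 1) * (((1 - PowerSeries.X ^ 2) * S 2) *
            (((1 - PowerSeries.X ^ 3) * S 3) * ((1 - PowerSeries.X ^ 4) * S 4))) := by
          norm_num; ring
      _ = 1 := by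
          rw [S_mul_eq_one 1 (by norm_num), S_mul_eq_one 2 (by norm_num),
            S_mul_eq_one 3 (by norm_num), S_mul_eq_one 4 (by norm_num)]
          norm_num
  · simp only [Finset.prod_range_succ, Finset.prod_range_zero, one_mul, map_mul, map_sub,
      map_one, map_pow, PowerSeries.constantCoeff_X]
    norm_num

/-- partitions into parts 2,3,4 -/
noncomputable def hseq (n : ℕ) : ℚ := PowerSeries.coeff n (S 2 * S 3 * S 4)
/-- partitions into parts 1,2,3 -/
noncomputable def gseq (n : ℕ) : ℚ := PowerSeries.coeff n (S 1 * S 2 * S 3)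
/-- partitions into parts 2,4,6 -/
noncomputable def bseq (n : ℕ) : ℚ := PowerSeries.coeff n (S 2 * S 4 * S 6)

lemma hseq_def (n : ℕ) : PowerSeries.coeff n (S 2 * S 3 * S 4) = hseq n := rfl
lemma gseq_def (n : ℕ) : PowerSeries.coeff n (S 1 * S 2 * S 3) = gseq n := rfl
lemma bseq_def (n : ℕ) : PowerSeries.coeff n (S 2 * S 4 * S 6) = bseq n := rfl

/-- extension by zero to ℤ -/
noncomputable def zext (f : ℕ → ℚ) (n : ℤ) : ℚ := if 0 ≤ n then f n.toNat else 0

lemma zext_coe (f : ℕ → ℚ) (n : ℕ) : zext f (n : ℤ) = f n := by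
  rw [zext, if_pos (by omega)]; simp

lemma zext_neg (f : ℕ → ℚ) {n : ℤ} (h : n < 0) : zext f n = 0 := by
  rw [zext, if_neg (by omega)]

lemma zext_sub_coe (f : ℕ → ℚ) (n d : ℕ) :
    (if d ≤ n then f (n - d) else 0) = zext f ((n : ℤ) - (d : ℤ)) := by
  by_cases h : d ≤ n
  · rw [if_pos h, zext, if_pos (by omega)]
    congr 1
    omega
  · rw [if_neg h, zext, if_neg (by omega)]

lemma S3_eq : S 3 = (1 + (PowerSeries.X : PowerSeries ℚ) ^ 3) * S 6 := by
  ext n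
  rw [add_mul, one_mul, map_add, PowerSeries.coeff_X_pow_mul', coeff_S, coeff_S]
  by_cases h3 : 3 ≤ n
  · rw [if_pos h3, coeff_S]
    by_cases h : 3 ∣ n
    · rw [if_pos h]
      by_cases h6 : 6 ∣ n
      · rw [if_pos h6, if_neg (by omega)]; norm_num
      · rw [if_neg h6, if_pos (by omega)]; norm_num
    · rw [if_neg h, if_neg (by omega), if_neg (by omega)]; norm_num
  · rw [if_neg h3]
    by_cases h : 3 ∣ n
    · rw [if_pos h, if_pos (by omega)]; norm_num
    · rw [if_neg h, if_neg (by omega)]; norm_num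

lemma H_eq_B : S 2 * S 3 * S 4 = (1 + (PowerSeries.X : PowerSeries ℚ) ^ 3) * (S 2 * S 4 * S 6) := by
  calc S 2 * S 3 * S 4 = S 2 * ((1 + (PowerSeries.X : PowerSeries ℚ)^3) * S 6) * S 4 := by
        rw [← S3_eq]
    _ = _ := by ring

lemma hseq_eq_bseq (n : ℕ) :
    hseq n = bseq n + (if 3 ≤ n then bseq (n - 3) else 0) := by
  rw [hseq, H_eq_B, add_mul, one_mul, map_add, PowerSeries.coeff_X_pow_mul', bseq_def]
  congr 1

lemma G_eq_H : S 1 * S 2 * S 3 =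
    (1 + (PowerSeries.X : PowerSeries ℚ)^1 + PowerSeries.X^2 + PowerSeries.X^3) *
      (S 2 * S 3 * S 4) := by
  have e1 := S_mul_eq_one 1 (by norm_num)
  have e4 := S_mul_eq_one 4 (by norm_num)
  calc S 1 * S 2 * S 3
      = ((1 - (PowerSeries.X : PowerSeries ℚ)^4) * S 4) * (S 1 * S 2 * S 3) := by
        rw [e4, one_mul]
    _ = ((1 + (PowerSeries.X : PowerSeries ℚ)^1 + PowerSeries.X^2 + PowerSeries.X^3) *
          (S 2 * S 3 * S 4)) * ((1 - (PowerSeries.X : PowerSeries ℚ)^1) * S 1) := by ring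
    _ = _ := by rw [e1, mul_one]

lemma gsum (n : ℤ) : zext gseq n =
    zext hseq n + zext hseq (n - 1) + zext hseq (n - 2) + zext hseq (n - 3) := by
  rcases lt_or_ge n 0 with h | h
  · rw [zext_neg gseq h, zext_neg hseq h, zext_neg hseq (show n-1<0 by omega),
      zext_neg hseq (show n-2<0 by omega), zext_neg hseq (show n-3<0 by omega)]
    norm_num
  · lift n to ℕ using h with m
    rw [zext_coe, gseq, G_eq_H]
    simp only [add_mul, one_mul, map_add, PowerSeries.coeff_X_pow_mul', hseq_def]
    rw [zext_sub_coe hseq m 1, zext_sub_coe hseq m 2, zext_sub_coe hseq m 3, zext_coe]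
    push_cast
    ring

lemma G_rec_id : S 1 * S 2 * S 3 =
    1 + ((PowerSeries.X : PowerSeries ℚ)^1 + PowerSeries.X^2 - PowerSeries.X^4
      - PowerSeries.X^5 + PowerSeries.X^6) * (S 1 * S 2 * S 3) := by
  have P1 : ((1 - (PowerSeries.X : PowerSeries ℚ)^1) * (1 - PowerSeries.X^2) *
      (1 - PowerSeries.X^3)) * (S 1 * S 2 * S 3) = 1 := by
    calc ((1 - (PowerSeries.X : PowerSeries ℚ)^1) * (1 - PowerSeries.X^2) *
        (1 - PowerSeries.X^3)) * (S 1 * S 2 * S 3)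
        = ((1 - PowerSeries.X^1) * S 1) * (((1 - PowerSeries.X^2) * S 2) *
            ((1 - PowerSeries.X^3) * S 3)) := by ring
      _ = 1 := by
        rw [S_mul_eq_one 1 (by norm_num), S_mul_eq_one 2 (by norm_num),
          S_mul_eq_one 3 (by norm_num)]
        norm_num
  calc S 1 * S 2 * S 3
      = ((1 - (PowerSeries.X : PowerSeries ℚ)^1) * (1 - PowerSeries.X^2) *
          (1 - PowerSeries.X^3)) * (S 1 * S 2 * S 3)
        + ((PowerSeries.X : PowerSeries ℚ)^1 + PowerSeries.X^2 - PowerSeries.X^4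
          - PowerSeries.X^5 + PowerSeries.X^6) * (S 1 * S 2 * S 3) := by ring
    _ = _ := by rw [P1]

lemma B_rec_id : S 2 * S 4 * S 6 =
    1 + ((PowerSeries.X : PowerSeries ℚ)^2 + PowerSeries.X^4 - PowerSeries.X^8
      - PowerSeries.X^10 + PowerSeries.X^12) * (S 2 * S 4 * S 6) := by
  have P1 : ((1 - (PowerSeries.X : PowerSeries ℚ)^2) * (1 - PowerSeries.X^4) *
      (1 - PowerSeries.X^6)) * (S 2 * S 4 * S 6) = 1 := by
    calc ((1 - (PowerSeries.X : PowerSeries ℚ)^2) * (1 - PowerSeries.X^4) *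
        (1 - PowerSeries.X^6)) * (S 2 * S 4 * S 6)
        = ((1 - PowerSeries.X^2) * S 2) * (((1 - PowerSeries.X^4) * S 4) *
            ((1 - PowerSeries.X^6) * S 6)) := by ring
      _ = 1 := by
        rw [S_mul_eq_one 2 (by norm_num), S_mul_eq_one 4 (by norm_num),
          S_mul_eq_one 6 (by norm_num)]
        norm_num
  calc S 2 * S 4 * S 6
      = ((1 - (PowerSeries.X : PowerSeries ℚ)^2) * (1 - PowerSeries.X^4) *
          (1 - PowerSeries.X^6)) * (S 2 * S 4 * S 6)
        + ((PowerSeries.X : PowerSeries ℚ)^2 + PowerSeries.X^4 - PowerSeries.X^8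
          - PowerSeries.X^10 + PowerSeries.X^12) * (S 2 * S 4 * S 6) := by ring
    _ = _ := by rw [P1]

lemma grec (n : ℤ) : zext gseq n = (if n = 0 then 1 else 0)
    + zext gseq (n-1) + zext gseq (n-2) - zext gseq (n-4) - zext gseq (n-5)
    + zext gseq (n-6) := by
  rcases lt_or_ge n 0 with h | h
  · rw [zext_neg gseq h, zext_neg gseq (show n-1<0 by omega),
      zext_neg gseq (show n-2<0 by omega), zext_neg gseq (show n-4<0 by omega),
      zext_neg gseq (show n-5<0 by omega), zext_neg gseq (show n-6<0 by omega),
      if_neg (by omega)]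
    norm_num
  · lift n to ℕ using h with m
    rw [zext_coe, gseq]
    conv_lhs => rw [G_rec_id]
    simp only [map_add, map_sub, add_mul, sub_mul, PowerSeries.coeff_one,
      PowerSeries.coeff_X_pow_mul', gseq_def]
    rw [zext_sub_coe gseq m 1, zext_sub_coe gseq m 2, zext_sub_coe gseq m 4,
      zext_sub_coe gseq m 5, zext_sub_coe gseq m 6]
    simp only [Nat.cast_eq_zero, Nat.cast_ofNat, Nat.cast_one]
    ring

lemma brec (n : ℤ) : zext bseq n = (if n = 0 then 1 else 0)
    + zext bseq (n-2) + zext bseq (n-4) - zext bseq (n-8) - zext bseq (n-10)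
    + zext bseq (n-12) := by
  rcases lt_or_ge n 0 with h | h
  · rw [zext_neg bseq h, zext_neg bseq (show n-2<0 by omega),
      zext_neg bseq (show n-4<0 by omega), zext_neg bseq (show n-8<0 by omega),
      zext_neg bseq (show n-10<0 by omega), zext_neg bseq (show n-12<0 by omega),
      if_neg (by omega)]
    norm_num
  · lift n to ℕ using h with m
    rw [zext_coe, bseq]
    conv_lhs => rw [B_rec_id]
    simp only [map_add, map_sub, add_mul, sub_mul, PowerSeries.coeff_one,
      PowerSeries.coeff_X_pow_mul', bseq_def]
    rw [zext_sub_coe bseq m 2, zext_sub_coe bseq m 4, zext_sub_coe bseq m 8,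
      zext_sub_coe bseq m 10, zext_sub_coe bseq m 12]
    simp only [Nat.cast_eq_zero, Nat.cast_ofNat, Nat.cast_one]
    ring

lemma coeff_mul_odd {f g : PowerSeries ℚ}
    (hf : ∀ m, ¬ 2 ∣ m → PowerSeries.coeff m f = 0)
    (hg : ∀ m, ¬ 2 ∣ m → PowerSeries.coeff m g = 0) :
    ∀ n, ¬ 2 ∣ n → PowerSeries.coeff n (f * g) = 0 := by
  intro n hn
  rw [PowerSeries.coeff_mul]
  apply Finset.sum_eq_zero
  intro p hp
  rw [Finset.HasAntidiagonal.mem_antidiagonal] at hp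
  by_cases h : 2 ∣ p.1
  · rw [hg p.2 (by omega), mul_zero]
  · rw [hf p.1 h, zero_mul]

lemma coeff_S_odd {a : ℕ} (ha : 2 ∣ a) (m : ℕ) (hm : ¬ 2 ∣ m) :
    PowerSeries.coeff m (S a) = 0 := by
  rw [coeff_S, if_neg (fun h => hm (dvd_trans ha h))]

lemma bseq_odd (n : ℕ) (hn : ¬ 2 ∣ n) : bseq n = 0 := by
  rw [bseq]
  exact coeff_mul_odd (coeff_mul_odd (coeff_S_odd (by norm_num)) (coeff_S_odd (by norm_num)))
    (coeff_S_odd (by norm_num)) n hn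

lemma b2g : ∀ n : ℕ, bseq (2 * n) = gseq n := by
  intro n
  induction n using Nat.strong_induction_on with
  | _ n ih =>
    have step : ∀ i : ℕ, 0 < i → zext bseq (2*(n:ℤ) - 2*(i:ℤ)) = zext gseq ((n:ℤ) - (i:ℤ)) := by
      intro i hi
      by_cases h : i ≤ n
      · have h2 : (2*(n:ℤ) - 2*(i:ℤ)) = ((2*(n-i) : ℕ) : ℤ) := by push_cast [h]; ring
        have h3 : ((n:ℤ) - (i:ℤ)) = ((n - i : ℕ) : ℤ) := by push_cast [h]; ring
        rw [h2, h3, zext_coe, zext_coe, ih (n-i) (by omega)]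
      · rw [zext_neg _ (by omega), zext_neg _ (by omega)]
    have hb := brec (2*(n:ℤ))
    have hg := grec (n:ℤ)
    have c1 : zext bseq (2*(n:ℤ)) = bseq (2*n) := by
      rw [show (2*(n:ℤ)) = ((2*n : ℕ) : ℤ) by push_cast; ring, zext_coe]
    have c2 : zext gseq (n:ℤ) = gseq n := zext_coe _ _
    rw [c1,
      show (2*(n:ℤ) - 2) = 2*(n:ℤ) - 2*((1:ℕ):ℤ) by push_cast; ring,
      show (2*(n:ℤ) - 4) = 2*(n:ℤ) - 2*((2:ℕ):ℤ) by push_cast; ring,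
      show (2*(n:ℤ) - 8) = 2*(n:ℤ) - 2*((4:ℕ):ℤ) by push_cast; ring,
      show (2*(n:ℤ) - 10) = 2*(n:ℤ) - 2*((5:ℕ):ℤ) by push_cast; ring,
      show (2*(n:ℤ) - 12) = 2*(n:ℤ) - 2*((6:ℕ):ℤ) by push_cast; ring,
      step 1 (by norm_num), step 2 (by norm_num), step 4 (by norm_num),
      step 5 (by norm_num), step 6 (by norm_num)] at hb
    rw [c2] at hg
    rw [hb, hg]
    have : ((2*(n:ℤ) = 0)) ↔ ((n:ℤ) = 0) := by omega
    rw [show (if 2*(n:ℤ) = 0 then (1:ℚ) else 0) = (if (n:ℤ) = 0 then (1:ℚ) else 0) by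
      simp only [this]]
    rw [show ((n:ℤ) - ((1:ℕ):ℤ)) = (n:ℤ) - 1 by push_cast; ring,
      show ((n:ℤ) - ((2:ℕ):ℤ)) = (n:ℤ) - 2 by push_cast; ring,
      show ((n:ℤ) - ((4:ℕ):ℤ)) = (n:ℤ) - 4 by push_cast; ring,
      show ((n:ℤ) - ((5:ℕ):ℤ)) = (n:ℤ) - 5 by push_cast; ring,
      show ((n:ℤ) - ((6:ℕ):ℤ)) = (n:ℤ) - 6 by push_cast; ring]

lemma coeff_S_nonneg (a n : ℕ) : 0 ≤ PowerSeries.coeff n (S a) := by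
  rw [coeff_S]; split_ifs <;> norm_num

lemma coeff_mul_nonneg {f g : PowerSeries ℚ}
    (hf : ∀ m, 0 ≤ PowerSeries.coeff m f) (hg : ∀ m, 0 ≤ PowerSeries.coeff m g) :
    ∀ n, 0 ≤ PowerSeries.coeff n (f * g) := by
  intro n
  rw [PowerSeries.coeff_mul]
  exact Finset.sum_nonneg fun p _ => mul_nonneg (hf p.1) (hg p.2)

lemma bseq_nonneg (n : ℕ) : 0 ≤ bseq n :=
  coeff_mul_nonneg (coeff_mul_nonneg (fun m => coeff_S_nonneg 2 m) (fun m => coeff_S_nonneg 4 m))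
    (fun m => coeff_S_nonneg 6 m) n

lemma gseq_zero : gseq 0 = 1 := by
  rw [gseq]
  have : PowerSeries.coeff 0 (S 1 * S 2 * S 3) = PowerSeries.constantCoeff (S 1 * S 2 * S 3) :=
    PowerSeries.coeff_zero_eq_constantCoeff_apply _
  rw [this, map_mul, map_mul, constCoeff_S, constCoeff_S, constCoeff_S]
  norm_num

lemma gdiff (n : ℕ) : gseq (n + 1) - gseq n = PowerSeries.coeff (n+1) (S 2 * S 3) := by
  have e1 := S_mul_eq_one 1 (by norm_num)
  have key : S 2 * S 3 = (1 - (PowerSeries.X : PowerSeries ℚ)^1) * (S 1 * S 2 * S 3) := by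
    calc S 2 * S 3 = ((1 - (PowerSeries.X : PowerSeries ℚ)^1) * S 1) * (S 2 * S 3) := by
          rw [e1, one_mul]
      _ = _ := by ring
  rw [key, sub_mul, one_mul, map_sub, pow_one, PowerSeries.coeff_succ_X_mul, gseq_def, gseq_def]

lemma coeff23_nonneg (n : ℕ) : 0 ≤ PowerSeries.coeff n (S 2 * S 3) :=
  coeff_mul_nonneg (fun m => coeff_S_nonneg 2 m) (fun m => coeff_S_nonneg 3 m) n

set_option maxHeartbeats 1000000 in
lemma coeff23_pos (n : ℕ) (hn : 2 ≤ n) : 1 ≤ PowerSeries.coeff n (S 2 * S 3) := by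
  rw [PowerSeries.coeff_mul]
  by_cases h : 2 ∣ n
  · have hmem : ((n, 0) : ℕ × ℕ) ∈ Finset.HasAntidiagonal.antidiagonal n := by
      rw [Finset.HasAntidiagonal.mem_antidiagonal]
      omega
    calc (1:ℚ) = PowerSeries.coeff n (S 2) * PowerSeries.coeff 0 (S 3) := by
          rw [coeff_S, coeff_S, if_pos h, if_pos (dvd_zero 3)]; norm_num
      _ ≤ _ := Finset.single_le_sum (f := fun p : ℕ × ℕ => PowerSeries.coeff p.1 (S 2) * PowerSeries.coeff p.2 (S 3))
          (fun p _ => mul_nonneg (coeff_S_nonneg 2 p.1) (coeff_S_nonneg 3 p.2)) hmem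
  · have hmem : ((n - 3, 3) : ℕ × ℕ) ∈ Finset.HasAntidiagonal.antidiagonal n := by
      rw [Finset.HasAntidiagonal.mem_antidiagonal]; omega
    calc (1:ℚ) = PowerSeries.coeff (n-3) (S 2) * PowerSeries.coeff 3 (S 3) := by
          rw [coeff_S, coeff_S, if_pos (by omega), if_pos dvd_rfl]; norm_num
      _ ≤ _ := Finset.single_le_sum (f := fun p : ℕ × ℕ => PowerSeries.coeff p.1 (S 2) * PowerSeries.coeff p.2 (S 3))
          (fun p _ => mul_nonneg (coeff_S_nonneg 2 p.1) (coeff_S_nonneg 3 p.2)) hmem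

lemma gseq_mono : Monotone gseq := by
  apply monotone_nat_of_le_succ
  intro n
  have := gdiff n
  have h2 := coeff23_nonneg (n+1)
  linarith

lemma gseq_ge_one (n : ℕ) : 1 ≤ gseq n := by
  have := gseq_mono (Nat.zero_le n)
  rw [gseq_zero] at this
  exact this

lemma gseq_lt (s t : ℕ) (h1 : s + 1 ≤ t) (h2 : 2 ≤ t) : gseq s + 1 ≤ gseq t := by
  obtain ⟨u, rfl⟩ : ∃ u, t = u + 1 := ⟨t - 1, by omega⟩
  have hd := gdiff u
  have hp := coeff23_pos (u+1) (by omega)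
  have hm : gseq s ≤ gseq u := gseq_mono (by omega)
  linarith

lemma h_ge (s n : ℕ) (hn : 2*s + 4 ≤ n) (h5 : n ≠ 5) : gseq s + 1 ≤ hseq n := by
  rw [hseq_eq_bseq]
  rcases Nat.even_or_odd n with ⟨m, hm⟩ | ⟨m, hm⟩
  · have hb2 : bseq n = gseq m := by rw [show n = 2*m by omega, b2g]
    have hbn : (0:ℚ) ≤ (if 3 ≤ n then bseq (n-3) else 0) := by
      split_ifs
      · exact bseq_nonneg _
      · norm_num
    have hgl : gseq s + 1 ≤ gseq m := gseq_lt s m (by omega) (by omega)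
    linarith
  · have h3 : 3 ≤ n := by omega
    rw [if_pos h3]
    have hb2 : bseq (n - 3) = gseq (m - 1) := by rw [show n - 3 = 2*(m-1) by omega, b2g]
    have hgl : gseq s + 1 ≤ gseq (m - 1) := gseq_lt s (m-1) (by omega) (by omega)
    have := bseq_nonneg n
    linarith

lemma h_ge1 (n : ℕ) (hn : 2 ≤ n) : 1 ≤ hseq n := by
  rw [hseq_eq_bseq]
  rcases Nat.even_or_odd n with ⟨m, hm⟩ | ⟨m, hm⟩
  · have hb2 : bseq n = gseq m := by rw [show n = 2*m by omega, b2g]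
    have hbn : (0:ℚ) ≤ (if 3 ≤ n then bseq (n-3) else 0) := by
      split_ifs
      · exact bseq_nonneg _
      · norm_num
    have := gseq_ge_one m
    linarith
  · have h3 : 3 ≤ n := by omega
    rw [if_pos h3]
    have hb2 : bseq (n - 3) = gseq (m - 1) := by rw [show n - 3 = 2*(m-1) by omega, b2g]
    have := gseq_ge_one (m-1)
    have := bseq_nonneg n
    linarith

/-- The coefficient of `q^k` in the Gaussian polynomial (q-binomial coefficient)
`binom{ℓ+m}{m}_q = ∏_{i=1}^m (1-q^(ℓ+i))/(1-q^i)`, computed in `ℚ⟦q⟧`. -/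
noncomputable def gaussCoeff (ℓ m k : ℕ) : ℚ :=
  PowerSeries.coeff k
    ((∏ i ∈ Finset.range m, (1 - (PowerSeries.X : PowerSeries ℚ) ^ (ℓ + i + 1))) *
     (∏ i ∈ Finset.range m, (1 - (PowerSeries.X : PowerSeries ℚ) ^ (i + 1)))⁻¹)

lemma gauss_diff (ℓ k : ℕ) (hk : k + 1 < 2*ℓ + 3) :
    gaussCoeff ℓ 4 (k+1) - gaussCoeff ℓ 4 k
      = zext hseq ((k:ℤ)+1) - zext gseq ((k:ℤ) - (ℓ:ℤ)) := by
  unfold gaussCoeff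
  rw [prod_inv]
  set N : PowerSeries ℚ := ∏ i ∈ Finset.range 4,
      (1 - (PowerSeries.X : PowerSeries ℚ) ^ (ℓ + i + 1)) with hN
  have hF : (1 - (PowerSeries.X : PowerSeries ℚ)^1) * (S 1 * S 2 * S 3 * S 4)
      = S 2 * S 3 * S 4 := by
    calc (1 - (PowerSeries.X : PowerSeries ℚ)^1) * (S 1 * S 2 * S 3 * S 4)
        = ((1 - PowerSeries.X^1) * S 1) * (S 2 * S 3 * S 4) := by ring
      _ = _ := by rw [S_mul_eq_one 1 (by norm_num), one_mul]
  have hdiff : PowerSeries.coeff (k+1) (N * (S 1*S 2*S 3*S 4))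
      - PowerSeries.coeff k (N * (S 1*S 2*S 3*S 4))
      = PowerSeries.coeff (k+1)
        ((1 - (PowerSeries.X : PowerSeries ℚ)^1) * (N * (S 1*S 2*S 3*S 4))) := by
    rw [sub_mul, one_mul, map_sub, pow_one, PowerSeries.coeff_succ_X_mul]
  rw [hdiff, show (1 - (PowerSeries.X : PowerSeries ℚ)^1) * (N * (S 1*S 2*S 3*S 4))
      = N * ((1 - PowerSeries.X^1) * (S 1*S 2*S 3*S 4)) by ring, hF]
  have expand : N * (S 2*S 3*S 4) =
      (S 2*S 3*S 4)
      - PowerSeries.X^(ℓ+1) * (S 2*S 3*S 4) - PowerSeries.X^(ℓ+2) * (S 2*S 3*S 4)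
      - PowerSeries.X^(ℓ+3) * (S 2*S 3*S 4) - PowerSeries.X^(ℓ+4) * (S 2*S 3*S 4)
      + PowerSeries.X^(2*ℓ+3) *
        ((1 + PowerSeries.X^1 + 2*PowerSeries.X^2 + PowerSeries.X^3 + PowerSeries.X^4
          - PowerSeries.X^(ℓ+3) - PowerSeries.X^(ℓ+4) - PowerSeries.X^(ℓ+5)
          - PowerSeries.X^(ℓ+6) + PowerSeries.X^(2*ℓ+7)) * (S 2*S 3*S 4)) := by
    rw [hN]
    simp only [Finset.prod_range_succ, Finset.prod_range_zero, one_mul]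
    ring
  rw [expand]
  simp only [map_add, map_sub, PowerSeries.coeff_X_pow_mul', hseq_def]
  rw [if_neg (show ¬ (2*ℓ+3 ≤ k+1) by omega)]
  rw [zext_sub_coe hseq (k+1) (ℓ+1), zext_sub_coe hseq (k+1) (ℓ+2),
    zext_sub_coe hseq (k+1) (ℓ+3), zext_sub_coe hseq (k+1) (ℓ+4)]
  rw [gsum ((k:ℤ) - (ℓ:ℤ))]
  rw [show ((k+1:ℕ):ℤ) - ((ℓ+1:ℕ):ℤ) = (k:ℤ) - (ℓ:ℤ) by push_cast; ring,
    show ((k+1:ℕ):ℤ) - ((ℓ+2:ℕ):ℤ) = (k:ℤ) - (ℓ:ℤ) - 1 by push_cast; ring,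
    show ((k+1:ℕ):ℤ) - ((ℓ+3:ℕ):ℤ) = (k:ℤ) - (ℓ:ℤ) - 2 by push_cast; ring,
    show ((k+1:ℕ):ℤ) - ((ℓ+4:ℕ):ℤ) = (k:ℤ) - (ℓ:ℤ) - 3 by push_cast; ring]
  rw [show ((k:ℤ)+1) = ((k+1:ℕ):ℤ) by push_cast; ring, zext_coe]
  ring

theorem one_strict_m4 (ℓ : ℕ) (hℓ : 1 ≤ ℓ) (hℓ4 : ℓ ≠ 4) (k : ℕ) (h1 : 1 ≤ k)
    (h2 : k ≤ 4 * ℓ / 2 - 3) :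
    gaussCoeff ℓ 4 (k + 1) - gaussCoeff ℓ 4 k ≥ 1 := by
  have hk3 : k + 3 ≤ 2 * ℓ := by omega
  rw [ge_iff_le, gauss_diff ℓ k (by omega)]
  have hh : zext hseq ((k:ℤ)+1) = hseq (k+1) := by
    rw [show ((k:ℤ)+1) = ((k+1:ℕ):ℤ) by push_cast; ring, zext_coe]
  by_cases hc : k < ℓ
  · rw [zext_neg gseq (by omega), hh]
    have := h_ge1 (k+1) (by omega)
    linarith
  · have hs : ((k:ℤ) - (ℓ:ℤ)) = ((k - ℓ : ℕ) : ℤ) := by omega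
    rw [hs, zext_coe, hh]
    have h5 : k + 1 ≠ 5 := by
      intro h
      exact hℓ4 (by omega)
    have := h_ge (k - ℓ) (k+1) (by omega) h5
    linarith
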